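/- Let v be a monotone, normalized valuation on a finite set M. Then v satisfies (SM) and (RGP) if and only if it satisfies both of the following: (NP-SM) there is no nonnegative price vector p, distinct items x,y and bundle S ⊆ M∖{x,y} with p_x > 0, p_y > 0, such that {S, S∪{x,y}} ⊆ D_p(v) ⊆ {T : T ⊆ S} ∪ {T∪{x,y} : T ⊆ S}; and (NP-RGP) there is no nonnegative price vector p, distinct items x,y,z and bundle S ⊆ M∖{x,y,z} with p_x, p_y, p_z > 0, such that {S∪{x}, S∪{y,z}} ⊆ D_p(v) ⊆ {T∪{x} : T ⊆ S} ∪ {T∪{y,z} : T ⊆ S}. -/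

import Mathlib

open Finset

section Defs

variable {M : Type*} [Fintype M] [DecidableEq M] {ι : Type*} [Fintype ι]

/-- A valuation is monotone. -/
def MonotoneVal (v : Finset M → ℝ) : Prop :=
  ∀ ⦃S T : Finset M⦄, S ⊆ T → v S ≤ v T

/-- Quasi-linear utility of a bundle `S` at prices `p`. -/
def util (v : Finset M → ℝ) (p : M → ℝ) (S : Finset M) : ℝ :=
  v S - ∑ x ∈ S, p x

/-- `S` is a utility-maximizing bundle for valuation `v` at prices `p`. -/
def InDemand (v : Finset M → ℝ) (p : M → ℝ) (S : Finset M) : Prop :=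
  ∀ T : Finset M, util v p T ≤ util v p S

/-- Gross-substitutes valuation. -/
def GrossSubstitutes (v : Finset M → ℝ) : Prop :=
  ∀ p q : M → ℝ, (∀ x, 0 ≤ p x) → (∀ x, 0 ≤ q x) → (∀ x, p x ≤ q x) →
    ∀ A : Finset M, InDemand v p A →
      ∃ B : Finset M, InDemand v q B ∧ ∀ x ∈ A, p x = q x → x ∈ B

/-- `v` is a `k`-demand (multi-demand) valuation:
`v S` is the maximum of `∑_{x ∈ T} v {x}` over `T ⊆ S` with `|T| ≤ k`. -/
def MultiDemand (v : Finset M → ℝ) (k : ℕ) : Prop :=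
  ∀ S : Finset M,
    IsGreatest {t : ℝ | ∃ T ⊆ S, T.card ≤ k ∧ t = ∑ x ∈ T, v {x}} (v S)

/-- `v` is a unit-demand valuation: `v ∅ = 0` and `v S = max_{x ∈ S} v {x}`. -/
def UnitDemand (v : Finset M → ℝ) : Prop :=
  v ∅ = 0 ∧ ∀ S : Finset M, S.Nonempty →
    IsGreatest {t : ℝ | ∃ x ∈ S, t = v {x}} (v S)

/-- An allocation: a family of pairwise disjoint bundles. -/
def IsAlloc (A : ι → Finset M) : Prop :=
  ∀ i j : ι, i ≠ j → Disjoint (A i) (A j)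

/-- Social welfare of an allocation. -/
def SW (v : ι → Finset M → ℝ) (A : ι → Finset M) : ℝ :=
  ∑ i, v i (A i)

/-- An optimal allocation: it maximizes social welfare among allocations. -/
def IsOptimalAlloc (v : ι → Finset M → ℝ) (A : ι → Finset M) : Prop :=
  IsAlloc A ∧ ∀ B : ι → Finset M, IsAlloc B → SW v B ≤ SW v A

/-- `p` is an optimal dynamic pricing: every demanded bundle of every buyer is
her bundle in some optimal allocation. -/
def IsDynamicPricing (v : ι → Finset M → ℝ) (p : M → ℝ) : Prop :=
  (∀ x, 0 ≤ p x) ∧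
  ∀ (i : ι) (S : Finset M), InDemand (v i) p S →
    ∃ A : ι → Finset M, IsOptimalAlloc v A ∧ A i = S

/-- Walrasian equilibrium: every buyer gets a demanded bundle and unallocated
items have price 0. -/
def IsWalrasianEq (v : ι → Finset M → ℝ) (A : ι → Finset M) (p : M → ℝ) : Prop :=
  (∀ x, 0 ≤ p x) ∧ IsAlloc A ∧ (∀ i, InDemand (v i) p (A i)) ∧
  ∀ x : M, (∀ i, x ∉ A i) → p x = 0

/-- Item `x` is legal for buyer `i`: some optimal allocation gives `x` to `i`. -/
def LegalItem (v : ι → Finset M → ℝ) (i : ι) (x : M) : Prop :=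
  ∃ A : ι → Finset M, IsOptimalAlloc v A ∧ x ∈ A i

/-- A bundle `S` is legal for buyer `i`: `|S| = k i` and every item of `S` is legal for `i`. -/
def LegalBundle (v : ι → Finset M → ℝ) (k : ι → ℕ) (i : ι) (S : Finset M) : Prop :=
  S.card = k i ∧ ∀ x ∈ S, LegalItem v i x

/-- A legal allocation: every buyer's bundle is legal for her. -/
def LegalAlloc (v : ι → Finset M → ℝ) (k : ι → ℕ) (A : ι → Finset M) : Prop :=
  IsAlloc A ∧ ∀ i, LegalBundle v k i (A i)

/-- Submodularity condition (SM). -/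
def SMcond (v : Finset M → ℝ) : Prop :=
  ∀ (x y : M) (S : Finset M), x ≠ y → x ∉ S → y ∉ S →
    v S + v (S ∪ {x, y}) ≤ v (S ∪ {x}) + v (S ∪ {y})

/-- Condition (RGP). -/
def RGPcond (v : Finset M → ℝ) : Prop :=
  ∀ (x y z : M) (S : Finset M), x ≠ y → x ≠ z → y ≠ z → x ∉ S → y ∉ S → z ∉ S →
    v (S ∪ {x}) + v (S ∪ {y, z}) ≤
      max (v (S ∪ {y}) + v (S ∪ {x, z})) (v (S ∪ {z}) + v (S ∪ {x, y}))

/-- Condition (NP-SM) with nonnegative prices. -/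
def NPSM (v : Finset M → ℝ) : Prop :=
  ¬ ∃ (p : M → ℝ) (x y : M) (S : Finset M),
      (∀ a, 0 ≤ p a) ∧ x ≠ y ∧ x ∉ S ∧ y ∉ S ∧ 0 < p x ∧ 0 < p y ∧
      InDemand v p S ∧ InDemand v p (S ∪ {x, y}) ∧
      ∀ C : Finset M, InDemand v p C → (C ⊆ S ∨ ∃ T ⊆ S, C = T ∪ {x, y})

/-- Condition (NP-RGP) with nonnegative prices. -/
def NPRGP (v : Finset M → ℝ) : Prop :=
  ¬ ∃ (p : M → ℝ) (x y z : M) (S : Finset M),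
      (∀ a, 0 ≤ p a) ∧ x ≠ y ∧ x ≠ z ∧ y ≠ z ∧ x ∉ S ∧ y ∉ S ∧ z ∉ S ∧
      0 < p x ∧ 0 < p y ∧ 0 < p z ∧
      InDemand v p (S ∪ {x}) ∧ InDemand v p (S ∪ {y, z}) ∧
      ∀ C : Finset M, InDemand v p C →
        ((∃ T ⊆ S, C = T ∪ {x}) ∨ ∃ T ⊆ S, C = T ∪ {y, z})

end Defs

section Aux

variable {M : Type*} [Fintype M] [DecidableEq M]

/-- The price vector used in the constructions. -/
def pr (S : Finset M) (x y z : M) (px py pz H : ℝ) : M → ℝ := fun a =>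
  (if a = x then px else 0) + (if a = y then py else 0) + (if a = z then pz else 0) +
  (if a ∈ S ∪ {x, y, z} then 0 else H)

omit [Fintype M] in
lemma pr_nonneg {S : Finset M} {x y z : M} {px py pz H : ℝ}
    (hx : 0 ≤ px) (hy : 0 ≤ py) (hz : 0 ≤ pz) (hH : 0 ≤ H) (a : M) :
    0 ≤ pr S x y z px py pz H a := by
  unfold pr
  have h1 : (0:ℝ) ≤ if a = x then px else 0 := by split <;> simp [hx]
  have h2 : (0:ℝ) ≤ if a = y then py else 0 := by split <;> simp [hy]
  have h3 : (0:ℝ) ≤ if a = z then pz else 0 := by split <;> simp [hz]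
  have h4 : (0:ℝ) ≤ if a ∈ S ∪ {x, y, z} then 0 else H := by split <;> simp [hH]
  linarith

omit [Fintype M] in
lemma sum_pr (S : Finset M) (x y z : M) (px py pz H : ℝ) (T : Finset M) :
    ∑ a ∈ T, pr S x y z px py pz H a =
      (if x ∈ T then px else 0) + (if y ∈ T then py else 0) + (if z ∈ T then pz else 0) +
      (T \ (S ∪ {x, y, z})).card * H := by
  unfold pr
  rw [Finset.sum_add_distrib, Finset.sum_add_distrib, Finset.sum_add_distrib,
    Finset.sum_ite_eq' T x (fun _ => px), Finset.sum_ite_eq' T y (fun _ => py),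
    Finset.sum_ite_eq' T z (fun _ => pz),
    Finset.sum_ite, Finset.sum_const_zero, Finset.sum_const, zero_add,
    Finset.sdiff_eq_filter]
  simp [mul_comm]

omit [Fintype M] in
lemma util_pr_subset {v : Finset M → ℝ} {S : Finset M} {x y z : M} {px py pz H : ℝ}
    {T : Finset M} (h : T ⊆ S ∪ {x, y, z}) :
    util v (pr S x y z px py pz H) T =
      v T - ((if x ∈ T then px else 0) + (if y ∈ T then py else 0) +
        (if z ∈ T then pz else 0)) := by
  rw [util, sum_pr, Finset.sdiff_eq_empty_iff_subset.mpr h]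
  simp

omit [Fintype M] in
lemma util_pr_not_subset {v : Finset M → ℝ} {S : Finset M} {x y z : M} {px py pz H : ℝ}
    {T : Finset M}
    (hx : 0 ≤ px) (hy : 0 ≤ py) (hz : 0 ≤ pz) (hH : 0 ≤ H)
    (h : ¬ T ⊆ S ∪ {x, y, z}) :
    util v (pr S x y z px py pz H) T ≤ v T - H := by
  rw [util, sum_pr]
  have hcard : 1 ≤ (T \ (S ∪ {x, y, z})).card := by
    rw [Nat.one_le_iff_ne_zero, ← Nat.pos_iff_ne_zero, Finset.card_pos]
    rw [← Finset.sdiff_eq_empty_iff_subset] at h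
    exact Finset.nonempty_iff_ne_empty.mpr h
  have hc : (1:ℝ) ≤ ((T \ (S ∪ {x, y, z})).card : ℝ) := by exact_mod_cast hcard
  have : H ≤ ((T \ (S ∪ {x, y, z})).card : ℝ) * H := by nlinarith
  have h1 : (0:ℝ) ≤ if x ∈ T then px else 0 := by split <;> simp [hx]
  have h2 : (0:ℝ) ≤ if y ∈ T then py else 0 := by split <;> simp [hy]
  have h3 : (0:ℝ) ≤ if z ∈ T then pz else 0 := by split <;> simp [hz]
  linarith

omit [Fintype M] in
/-- Refine a subset bound using membership information. -/
lemma val_le_of_subset {v : Finset M → ℝ} (hmono : MonotoneVal v)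
    {S T : Finset M} {x y z : M} (h : T ⊆ S ∪ {x, y, z}) (J : Finset M)
    (hx : x ∈ T → x ∈ S ∪ J) (hy : y ∈ T → y ∈ S ∪ J) (hz : z ∈ T → z ∈ S ∪ J) :
    v T ≤ v (S ∪ J) := by
  apply hmono
  intro a ha
  have h2 := h ha
  simp only [Finset.mem_union, Finset.mem_insert, Finset.mem_singleton] at h2
  rcases h2 with h2 | h2 | h2 | h2
  · exact Finset.mem_union_left _ h2
  · exact h2 ▸ hx (h2 ▸ ha)
  · exact h2 ▸ hy (h2 ▸ ha)
  · exact h2 ▸ hz (h2 ▸ ha)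

omit [Fintype M] in
lemma sum_union_singleton (p : M → ℝ) {S : Finset M} {x : M} (hxS : x ∉ S) :
    ∑ a ∈ S ∪ {x}, p a = (∑ a ∈ S, p a) + p x := by
  have h1 : S ∪ ({x} : Finset M) = insert x S := by
    ext a; simp only [Finset.mem_union, Finset.mem_insert, Finset.mem_singleton]; tauto
  rw [h1, Finset.sum_insert hxS]; ring

omit [Fintype M] in
lemma sum_union_pair (p : M → ℝ) {S : Finset M} {x y : M} (hxy : x ≠ y)
    (hxS : x ∉ S) (hyS : y ∉ S) :
    ∑ a ∈ S ∪ {x, y}, p a = (∑ a ∈ S, p a) + p x + p y := by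
  have h1 : S ∪ ({x, y} : Finset M) = insert x (insert y S) := by
    ext a
    simp only [Finset.mem_union, Finset.mem_insert, Finset.mem_singleton]
    tauto
  have hx : x ∉ insert y S := by simp [hxy, hxS]
  rw [h1, Finset.sum_insert hx, Finset.sum_insert hyS]; ring

end Aux

lemma npsm_to_sm {M : Type*} [Fintype M] [DecidableEq M]
    (v : Finset M → ℝ) (hmono : MonotoneVal v) (hnorm : v ∅ = 0)
    (h : NPSM v) : SMcond v := by
  intro x y S hxy hxS hyS
  by_contra hlt
  push_neg at hlt
  -- hlt : v (S ∪ {x}) + v (S ∪ {y}) < v S + v (S ∪ {x, y})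
  set v0 := v S with hv0
  set v1 := v (S ∪ {x}) with hv1
  set v2 := v (S ∪ {y}) with hv2
  set v12 := v (S ∪ {x, y}) with hv12
  have hSx : S ⊆ S ∪ {x} := Finset.subset_union_left
  have hSy : S ⊆ S ∪ {y} := Finset.subset_union_left
  have ha : 0 ≤ v1 - v0 := by have := hmono hSx; linarith
  have hb : 0 ≤ v2 - v0 := by have := hmono hSy; linarith
  have hvv0 : 0 ≤ v0 := by have := hmono (Finset.empty_subset S); rw [hnorm] at this; linarith
  set ε : ℝ := (v12 - v0 - (v1 - v0) - (v2 - v0)) / 2 with hεdef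
  have hε : 0 < ε := by rw [hεdef]; linarith
  set px : ℝ := (v1 - v0) + ε with hpxdef
  set py : ℝ := (v2 - v0) + ε with hpydef
  have hpx0 : 0 < px := by rw [hpxdef]; linarith
  have hpy0 : 0 < py := by rw [hpydef]; linarith
  set H : ℝ := v Finset.univ + 1 + ε with hHdef
  have hTuniv : ∀ T : Finset M, v T ≤ v Finset.univ := fun T => hmono (Finset.subset_univ T)
  have hH0 : 0 ≤ H := by
    have := hTuniv ∅; rw [hnorm] at this; rw [hHdef]; linarith
  set p : M → ℝ := pr S x y x px py 0 H with hpdef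
  have hpnn : ∀ a, 0 ≤ p a := pr_nonneg (le_of_lt hpx0) (le_of_lt hpy0) le_rfl hH0
  -- the pr "K" set
  have hKsub : ∀ {T : Finset M}, T ⊆ S ∪ {x, y} → T ⊆ S ∪ {x, y, x} := by
    intro T hT a ha
    have := hT ha
    simp only [Finset.mem_union, Finset.mem_insert, Finset.mem_singleton] at this ⊢
    tauto
  -- utility upper bounds by case
  have hub : ∀ T : Finset M, util v p T ≤ v0 := by
    intro T
    by_cases hT : T ⊆ S ∪ {x, y, x}
    · rw [hpdef, util_pr_subset hT]
      by_cases hxT : x ∈ T <;> by_cases hyT : y ∈ T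
      · have hvT : v T ≤ v12 := val_le_of_subset hmono hT {x, y}
          (fun _ => by simp) (fun _ => by simp) (fun _ => by simp)
        simp only [hxT, hyT, if_true, if_false]
        rw [hpxdef, hpydef, hεdef]; linarith
      · have hvT : v T ≤ v1 := val_le_of_subset hmono hT {x}
          (fun _ => by simp) (fun hy' => absurd hy' hyT) (fun _ => by simp)
        simp only [hxT, hyT, if_true, if_false, not_false_iff]
        rw [hpxdef]; linarith
      · have hvT : v T ≤ v2 := val_le_of_subset hmono hT {y}
          (fun hx' => absurd hx' hxT) (fun _ => by simp) (fun hx' => absurd hx' hxT)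
        simp only [hxT, hyT, if_true, if_false, not_false_iff]
        rw [hpydef]; linarith
      · have hvT : v T ≤ v0 := by
          have : v T ≤ v (S ∪ ∅) := val_le_of_subset hmono hT ∅
            (fun hx' => absurd hx' hxT) (fun hy' => absurd hy' hyT)
            (fun hx' => absurd hx' hxT)
          simpa using this
        simp only [hxT, hyT, if_true, if_false]
        linarith
    · have := util_pr_not_subset (v := v) (le_of_lt hpx0) (le_of_lt hpy0) le_rfl hH0 hT
      rw [← hpdef] at this
      have h2 := hTuniv T
      rw [hHdef] at this
      linarith
  -- strict bound when exactly one of x, y is present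
  have hone : ∀ T : Finset M, (x ∈ T ∧ y ∉ T) ∨ (x ∉ T ∧ y ∈ T) → util v p T ≤ v0 - ε := by
    intro T hT'
    by_cases hT : T ⊆ S ∪ {x, y, x}
    · rw [hpdef, util_pr_subset hT]
      rcases hT' with ⟨hxT, hyT⟩ | ⟨hxT, hyT⟩
      · have hvT : v T ≤ v1 := val_le_of_subset hmono hT {x}
          (fun _ => by simp) (fun hy' => absurd hy' hyT) (fun _ => by simp)
        simp only [hxT, hyT, if_true, if_false, not_false_iff]
        rw [hpxdef]; linarith
      · have hvT : v T ≤ v2 := val_le_of_subset hmono hT {y}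
          (fun hx' => absurd hx' hxT) (fun _ => by simp) (fun hx' => absurd hx' hxT)
        simp only [hxT, hyT, if_true, if_false, not_false_iff]
        rw [hpydef]; linarith
    · have := util_pr_not_subset (v := v) (le_of_lt hpx0) (le_of_lt hpy0) le_rfl hH0 hT
      rw [← hpdef] at this
      have h2 := hTuniv T
      rw [hHdef] at this
      linarith
  -- utilities of S and S ∪ {x, y}
  have hus : util v p S = v0 := by
    have hsub : S ⊆ S ∪ {x, y, x} := Finset.subset_union_left
    rw [hpdef, util_pr_subset hsub]
    simp [hxS, hyS, hv0]
  have husxy : util v p (S ∪ {x, y}) = v0 := by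
    have hsub : S ∪ {x, y} ⊆ S ∪ {x, y, x} := hKsub (subset_refl _)
    rw [hpdef, util_pr_subset hsub]
    have hx' : x ∈ S ∪ {x, y} := by simp
    have hy' : y ∈ S ∪ {x, y} := by simp
    simp only [hx', hy', if_true, if_false]
    rw [hpxdef, hpydef, hεdef]; ring
  have hdS : InDemand v p S := by intro T; rw [hus]; exact hub T
  have hdSxy : InDemand v p (S ∪ {x, y}) := by intro T; rw [husxy]; exact hub T
  -- p x and p y
  have hpx' : 0 < p x := by
    have : p x = px := by
      rw [hpdef]; unfold pr
      have : x ∈ S ∪ ({x, y, x} : Finset M) := by simp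
      simp [hxy, this]
    rw [this]; exact hpx0
  have hpy' : 0 < p y := by
    have : p y = py := by
      rw [hpdef]; unfold pr
      have : y ∈ S ∪ ({x, y, x} : Finset M) := by simp
      simp [Ne.symm hxy, this]
    rw [this]; exact hpy0
  -- classification of demanded bundles
  refine h ⟨p, x, y, S, hpnn, hxy, hxS, hyS, hpx', hpy', hdS, hdSxy, ?_⟩
  intro C hC
  have hCu : util v p C = v0 := le_antisymm (hub C) (by rw [← hus]; exact hC S)
  have hCK : C ⊆ S ∪ {x, y, x} := by
    by_contra hcon
    have := util_pr_not_subset (v := v) (le_of_lt hpx0) (le_of_lt hpy0) le_rfl hH0 hcon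
    rw [← hpdef] at this
    have h2 := hTuniv C
    rw [hHdef] at this
    linarith
  by_cases hxC : x ∈ C <;> by_cases hyC : y ∈ C
  · right
    refine ⟨C \ {x, y}, ?_, ?_⟩
    · intro a ha
      simp only [Finset.mem_sdiff, Finset.mem_insert, Finset.mem_singleton] at ha
      obtain ⟨ha, hax⟩ := ha
      have := hCK ha
      simp only [Finset.mem_union, Finset.mem_insert, Finset.mem_singleton] at this
      tauto
    · ext a
      simp only [Finset.mem_union, Finset.mem_sdiff, Finset.mem_insert,
        Finset.mem_singleton]
      constructor
      · intro ha; by_cases hax : a = x; · tauto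
        by_cases hay : a = y; · tauto
        tauto
      · rintro (⟨ha, _⟩ | ha | ha)
        · exact ha
        · exact ha ▸ hxC
        · exact ha ▸ hyC
  · exfalso; have := hone C (Or.inl ⟨hxC, hyC⟩); linarith
  · exfalso; have := hone C (Or.inr ⟨hxC, hyC⟩); linarith
  · left
    intro a ha
    have := hCK ha
    simp only [Finset.mem_union, Finset.mem_insert, Finset.mem_singleton] at this
    rcases this with h' | h' | h' | h'
    · exact h'
    · exact absurd (h' ▸ ha) hxC
    · exact absurd (h' ▸ ha) hyC
    · exact absurd (h' ▸ ha) hxC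

lemma exists_mid (a1 a2 b1 b2 : ℝ) (h0b1 : 0 < b1) (h0b2 : 0 < b2)
    (h11 : a1 < b1) (h12 : a1 < b2) (h21 : a2 < b1) (h22 : a2 < b2) :
    ∃ t : ℝ, 0 < t ∧ a1 < t ∧ a2 < t ∧ t < b1 ∧ t < b2 := by
  refine ⟨(max (max 0 a1) a2 + min b1 b2) / 2, ?_, ?_, ?_, ?_, ?_⟩ <;>
  · have hLU := max_lt (max_lt (lt_min h0b1 h0b2) (lt_min h11 h12)) (lt_min h21 h22)
    have hL0 : (0:ℝ) ≤ max (max 0 a1) a2 := le_trans (le_max_left _ _) (le_max_left _ _)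
    have hLa : a1 ≤ max (max 0 a1) a2 := le_trans (le_max_right _ _) (le_max_left _ _)
    have hLb : a2 ≤ max (max 0 a1) a2 := le_max_right _ _
    have hU1 : min b1 b2 ≤ b1 := min_le_left _ _
    have hU2 : min b1 b2 ≤ b2 := min_le_right _ _
    linarith

lemma exists_pair (b1 b2 c1 c2 s : ℝ)
    (h00 : 0 < s) (h01 : c1 < s) (h02 : c2 < s) (h10 : b1 < s)
    (h11 : b1 + c1 < s) (h12 : b1 + c2 < s) (h20 : b2 < s)
    (h21 : b2 + c1 < s) (h22 : b2 + c2 < s) :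
    ∃ p q : ℝ, 0 < p ∧ 0 < q ∧ b1 < p ∧ b2 < p ∧ c1 < q ∧ c2 < q ∧ p + q = s := by
  have hbc : max (max 0 b1) b2 + max (max 0 c1) c2 < s := by
    rcases max_cases (max (0:ℝ) b1) b2 with ⟨h1, _⟩ | ⟨h1, _⟩ <;>
      rcases max_cases (0:ℝ) b1 with ⟨h2, _⟩ | ⟨h2, _⟩ <;>
      rcases max_cases (max (0:ℝ) c1) c2 with ⟨h3, _⟩ | ⟨h3, _⟩ <;>
      rcases max_cases (0:ℝ) c1 with ⟨h4, _⟩ | ⟨h4, _⟩ <;>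
      linarith
  have hb0 : (0:ℝ) ≤ max (max 0 b1) b2 := le_trans (le_max_left _ _) (le_max_left _ _)
  have hb1 : b1 ≤ max (max 0 b1) b2 := le_trans (le_max_right _ _) (le_max_left _ _)
  have hb2 : b2 ≤ max (max 0 b1) b2 := le_max_right _ _
  have hc0 : (0:ℝ) ≤ max (max 0 c1) c2 := le_trans (le_max_left _ _) (le_max_left _ _)
  have hc1 : c1 ≤ max (max 0 c1) c2 := le_trans (le_max_right _ _) (le_max_left _ _)
  have hc2 : c2 ≤ max (max 0 c1) c2 := le_max_right _ _
  refine ⟨max (max 0 b1) b2 + (s - max (max 0 b1) b2 - max (max 0 c1) c2) / 2,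
    max (max 0 c1) c2 + (s - max (max 0 b1) b2 - max (max 0 c1) c2) / 2,
    by linarith, by linarith, by linarith, by linarith, by linarith, by linarith, by linarith⟩

set_option maxHeartbeats 1600000 in
lemma sm_nprgp_to_rgp {M : Type*} [Fintype M] [DecidableEq M]
    (v : Finset M → ℝ) (hmono : MonotoneVal v) (hnorm : v ∅ = 0)
    (hsm : SMcond v) (h : NPRGP v) : RGPcond v := by
  intro x y z S hxy hxz hyz hxS hyS hzS
  by_contra hlt
  push_neg at hlt
  rw [max_lt_iff] at hlt
  obtain ⟨hA, hB⟩ := hlt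
  -- set equalities
  have exyz : (S ∪ {x}) ∪ {y, z} = S ∪ {x, y, z} := by
    ext a; simp only [Finset.mem_union, Finset.mem_insert, Finset.mem_singleton]; tauto
  have exy : (S ∪ {x}) ∪ {y} = S ∪ {x, y} := by
    ext a; simp only [Finset.mem_union, Finset.mem_insert, Finset.mem_singleton]; tauto
  have exz : (S ∪ {x}) ∪ {z} = S ∪ {x, z} := by
    ext a; simp only [Finset.mem_union, Finset.mem_insert, Finset.mem_singleton]; tauto
  have eyxz : (S ∪ {y}) ∪ {x, z} = S ∪ {x, y, z} := by
    ext a; simp only [Finset.mem_union, Finset.mem_insert, Finset.mem_singleton]; tauto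
  have eyx : (S ∪ {y}) ∪ {x} = S ∪ {x, y} := by
    ext a; simp only [Finset.mem_union, Finset.mem_insert, Finset.mem_singleton]; tauto
  have eyz : (S ∪ {y}) ∪ {z} = S ∪ {y, z} := by
    ext a; simp only [Finset.mem_union, Finset.mem_insert, Finset.mem_singleton]; tauto
  have ezxy : (S ∪ {z}) ∪ {x, y} = S ∪ {x, y, z} := by
    ext a; simp only [Finset.mem_union, Finset.mem_insert, Finset.mem_singleton]; tauto
  have ezx : (S ∪ {z}) ∪ {x} = S ∪ {x, z} := by
    ext a; simp only [Finset.mem_union, Finset.mem_insert, Finset.mem_singleton]; tauto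
  have ezy : (S ∪ {z}) ∪ {y} = S ∪ {y, z} := by
    ext a; simp only [Finset.mem_union, Finset.mem_insert, Finset.mem_singleton]; tauto
  -- non-membership facts
  have hySx : y ∉ S ∪ {x} := by
    simp only [Finset.mem_union, Finset.mem_singleton]
    rintro (h' | h'); · exact hyS h'
    exact hxy h'.symm
  have hzSx : z ∉ S ∪ {x} := by
    simp only [Finset.mem_union, Finset.mem_singleton]
    rintro (h' | h'); · exact hzS h'
    exact hxz h'.symm
  have hxSy : x ∉ S ∪ {y} := by
    simp only [Finset.mem_union, Finset.mem_singleton]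
    rintro (h' | h'); · exact hxS h'
    exact hxy h'
  have hzSy : z ∉ S ∪ {y} := by
    simp only [Finset.mem_union, Finset.mem_singleton]
    rintro (h' | h'); · exact hzS h'
    exact hyz h'.symm
  have hxSz : x ∉ S ∪ {z} := by
    simp only [Finset.mem_union, Finset.mem_singleton]
    rintro (h' | h'); · exact hxS h'
    exact hxz h'
  have hySz : y ∉ S ∪ {z} := by
    simp only [Finset.mem_union, Finset.mem_singleton]
    rintro (h' | h'); · exact hyS h'
    exact hyz h'
  -- SM instantiations
  have s1 := hsm x y S hxy hxS hyS
  have s2 := hsm x z S hxz hxS hzS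
  have s3 := hsm y z S hyz hyS hzS
  have s4 := hsm y z (S ∪ {x}) hyz hySx hzSx
  rw [exyz, exy, exz] at s4
  have s5 := hsm x z (S ∪ {y}) hxz hxSy hzSy
  rw [eyxz, eyx, eyz] at s5
  have s6 := hsm x y (S ∪ {z}) hxy hxSz hySz
  rw [ezxy, ezx, ezy] at s6
  -- abbreviations
  set v0 := v S with hv0
  set v1 := v (S ∪ {x}) with hv1
  set v2 := v (S ∪ {y}) with hv2
  set v3 := v (S ∪ {z}) with hv3
  set v12 := v (S ∪ {x, y}) with hv12
  set v13 := v (S ∪ {x, z}) with hv13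
  set v23 := v (S ∪ {y, z}) with hv23
  set v123 := v (S ∪ {x, y, z}) with hv123
  -- monotonicity facts
  have hsub1 : S ∪ {x} ⊆ S ∪ {x, y, z} := by
    intro a ha
    simp only [Finset.mem_union, Finset.mem_insert, Finset.mem_singleton] at ha ⊢; tauto
  have hsub12 : S ∪ {x, y} ⊆ S ∪ {x, y, z} := by
    intro a ha
    simp only [Finset.mem_union, Finset.mem_insert, Finset.mem_singleton] at ha ⊢; tauto
  have hsub13 : S ∪ {x, z} ⊆ S ∪ {x, y, z} := by
    intro a ha
    simp only [Finset.mem_union, Finset.mem_insert, Finset.mem_singleton] at ha ⊢; tauto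
  have hsub3 : S ∪ {z} ⊆ S ∪ {x, z} := by
    intro a ha
    simp only [Finset.mem_union, Finset.mem_insert, Finset.mem_singleton] at ha ⊢; tauto
  have hsub1' : S ∪ {x} ⊆ S ∪ {x, y} := by
    intro a ha
    simp only [Finset.mem_union, Finset.mem_insert, Finset.mem_singleton] at ha ⊢; tauto
  have hsub1'' : S ∪ {x} ⊆ S ∪ {x, z} := by
    intro a ha
    simp only [Finset.mem_union, Finset.mem_insert, Finset.mem_singleton] at ha ⊢; tauto
  have m1 : v1 ≤ v123 := hmono hsub1
  have m2 : v12 ≤ v123 := hmono hsub12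
  have m3 : v13 ≤ v123 := hmono hsub13
  have m4 : v3 ≤ v13 := hmono hsub3
  have m5 : v1 ≤ v12 := hmono hsub1'
  have m6 : v1 ≤ v13 := hmono hsub1''
  have hvv0 : 0 ≤ v0 := by
    have := hmono (Finset.empty_subset S); rw [hnorm] at this; linarith
  have hTuniv : ∀ T : Finset M, v T ≤ v Finset.univ := fun T => hmono (Finset.subset_univ T)
  -- choose px
  obtain ⟨px, hpx0, hpx2, hpx3, hpx4, hpx5⟩ :=
    exists_mid (v123 - v23) (v12 + v13 - v1 - v23) (v1 - v0) (v1 + v23 - v2 - v3)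
      (by linarith) (by linarith) (by linarith) (by linarith) (by linarith) (by linarith)
  -- choose py, pz
  obtain ⟨py, pz, hpy0, hpz0, hpy1, hpy2, hpz1, hpz2, hsum⟩ :=
    exists_pair (v12 - v1) (v2 - v1 + px) (v13 - v1) (v3 - v1 + px) (v23 - v1 + px)
      (by linarith) (by linarith) (by linarith) (by linarith) (by linarith)
      (by linarith) (by linarith) (by linarith) (by linarith)
  -- numeric facts
  have hu0 : v0 < v1 - px := by linarith
  have h2u : v2 - py < v1 - px := by linarith
  have h3u : v3 - pz < v1 - px := by linarith
  have h12u : v12 - px - py < v1 - px := by linarith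
  have h13u : v13 - px - pz < v1 - px := by linarith
  have h123u : v123 - px - py - pz < v1 - px := by linarith
  have h23u : v23 - py - pz = v1 - px := by linarith
  -- the price vector
  set H : ℝ := v Finset.univ + 1 with hHdef
  have hH0 : 0 ≤ H := by
    have := hTuniv ∅; rw [hnorm] at this; rw [hHdef]; linarith
  set p : M → ℝ := pr S x y z px py pz H with hpdef
  have hpnn : ∀ a, 0 ≤ p a :=
    pr_nonneg (le_of_lt hpx0) (le_of_lt hpy0) (le_of_lt hpz0) hH0
  -- upper bound on utility
  have hub : ∀ T : Finset M, util v p T ≤ v1 - px := by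
    intro T
    by_cases hT : T ⊆ S ∪ {x, y, z}
    · rw [hpdef, util_pr_subset hT]
      by_cases hxT : x ∈ T <;> by_cases hyT : y ∈ T <;> by_cases hzT : z ∈ T
      · have hvT : v T ≤ v123 := by
          have := val_le_of_subset hmono hT {x, y, z}
            (fun _ => by simp) (fun _ => by simp) (fun _ => by simp)
          rw [hv123]; exact this
        simp only [hxT, hyT, hzT, if_true]; linarith
      · have hvT : v T ≤ v12 := by
          have := val_le_of_subset hmono hT {x, y}
            (fun _ => by simp) (fun _ => by simp) (fun h' => absurd h' hzT)
          rw [hv12]; exact this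
        simp only [hxT, hyT, hzT, if_true, if_false]; linarith
      · have hvT : v T ≤ v13 := by
          have := val_le_of_subset hmono hT {x, z}
            (fun _ => by simp) (fun h' => absurd h' hyT) (fun _ => by simp)
          rw [hv13]; exact this
        simp only [hxT, hyT, hzT, if_true, if_false]; linarith
      · have hvT : v T ≤ v1 := by
          have := val_le_of_subset hmono hT {x}
            (fun _ => by simp) (fun h' => absurd h' hyT) (fun h' => absurd h' hzT)
          rw [hv1]; exact this
        simp only [hxT, hyT, hzT, if_true, if_false]; linarith
      · have hvT : v T ≤ v23 := by
          have := val_le_of_subset hmono hT {y, z}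
            (fun h' => absurd h' hxT) (fun _ => by simp) (fun _ => by simp)
          rw [hv23]; exact this
        simp only [hxT, hyT, hzT, if_true, if_false]; linarith
      · have hvT : v T ≤ v2 := by
          have := val_le_of_subset hmono hT {y}
            (fun h' => absurd h' hxT) (fun _ => by simp) (fun h' => absurd h' hzT)
          rw [hv2]; exact this
        simp only [hxT, hyT, hzT, if_true, if_false]; linarith
      · have hvT : v T ≤ v3 := by
          have := val_le_of_subset hmono hT {z}
            (fun h' => absurd h' hxT) (fun h' => absurd h' hyT) (fun _ => by simp)
          rw [hv3]; exact this
        simp only [hxT, hyT, hzT, if_true, if_false]; linarith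
      · have hvT : v T ≤ v0 := by
          have := val_le_of_subset hmono hT ∅
            (fun h' => absurd h' hxT) (fun h' => absurd h' hyT) (fun h' => absurd h' hzT)
          rw [hv0]; simpa using this
        simp only [hxT, hyT, hzT, if_false]; linarith
    · have hb := util_pr_not_subset (v := v)
        (le_of_lt hpx0) (le_of_lt hpy0) (le_of_lt hpz0) hH0 hT
      rw [← hpdef] at hb
      have h2 := hTuniv T
      rw [hHdef] at hb
      linarith
  -- exact utilities of the two target bundles
  have husx : util v p (S ∪ {x}) = v1 - px := by
    have hsub : S ∪ {x} ⊆ S ∪ {x, y, z} := hsub1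
    rw [hpdef, util_pr_subset hsub]
    have hx' : x ∈ S ∪ {x} := by simp
    simp only [hx', hySx, hzSx, if_true, if_false]
    rw [← hv1]; ring
  have husyz : util v p (S ∪ {y, z}) = v1 - px := by
    have hsub : S ∪ {y, z} ⊆ S ∪ {x, y, z} := by
      intro a ha
      simp only [Finset.mem_union, Finset.mem_insert, Finset.mem_singleton] at ha ⊢; tauto
    rw [hpdef, util_pr_subset hsub]
    have hy' : y ∈ S ∪ {y, z} := by simp
    have hz' : z ∈ S ∪ {y, z} := by simp
    have hx' : x ∉ S ∪ {y, z} := by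
      simp only [Finset.mem_union, Finset.mem_insert, Finset.mem_singleton]
      rintro (h' | h' | h')
      · exact hxS h'
      · exact hxy h'
      · exact hxz h'
    simp only [hx', hy', hz', if_true, if_false]
    rw [← hv23]; linarith
  have hdx : InDemand v p (S ∪ {x}) := by intro T; rw [husx]; exact hub T
  have hdyz : InDemand v p (S ∪ {y, z}) := by intro T; rw [husyz]; exact hub T
  -- positive prices on x, y, z
  have hxK : x ∈ S ∪ ({x, y, z} : Finset M) := by simp
  have hyK : y ∈ S ∪ ({x, y, z} : Finset M) := by simp
  have hzK : z ∈ S ∪ ({x, y, z} : Finset M) := by simp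
  have hpx' : 0 < p x := by
    have : p x = px := by rw [hpdef]; unfold pr; simp [hxy, hxz, hxK]
    rw [this]; exact hpx0
  have hpy' : 0 < p y := by
    have : p y = py := by rw [hpdef]; unfold pr; simp [Ne.symm hxy, hyz, hyK]
    rw [this]; exact hpy0
  have hpz' : 0 < p z := by
    have : p z = pz := by rw [hpdef]; unfold pr; simp [Ne.symm hxz, Ne.symm hyz, hzK]
    rw [this]; exact hpz0
  -- contradiction with NPRGP
  refine h ⟨p, x, y, z, S, hpnn, hxy, hxz, hyz, hxS, hyS, hzS, hpx', hpy', hpz',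
    hdx, hdyz, ?_⟩
  intro C hC
  have hCu : util v p C = v1 - px := le_antisymm (hub C) (by rw [← husx]; exact hC (S ∪ {x}))
  have hCK : C ⊆ S ∪ {x, y, z} := by
    by_contra hcon
    have hb := util_pr_not_subset (v := v)
      (le_of_lt hpx0) (le_of_lt hpy0) (le_of_lt hpz0) hH0 hcon
    rw [← hpdef] at hb
    have h2 := hTuniv C
    rw [hHdef] at hb
    linarith
  have hCval := util_pr_subset (v := v) (px := px) (py := py) (pz := pz) (H := H) hCK
  rw [← hpdef] at hCval
  by_cases hxC : x ∈ C <;> by_cases hyC : y ∈ C <;> by_cases hzC : z ∈ C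
  · -- x, y, z ∈ C : impossible
    exfalso
    have hvC : v C ≤ v123 := by
      have := val_le_of_subset hmono hCK {x, y, z}
        (fun _ => by simp) (fun _ => by simp) (fun _ => by simp)
      rw [hv123]; exact this
    rw [hCval] at hCu
    simp only [hxC, hyC, hzC, if_true] at hCu
    linarith
  · -- x, y ∈ C, z ∉ C : impossible
    exfalso
    have hvC : v C ≤ v12 := by
      have := val_le_of_subset hmono hCK {x, y}
        (fun _ => by simp) (fun _ => by simp) (fun h' => absurd h' hzC)
      rw [hv12]; exact this
    rw [hCval] at hCu
    simp only [hxC, hyC, hzC, if_true, if_false] at hCu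
    linarith
  · -- x, z ∈ C, y ∉ C : impossible
    exfalso
    have hvC : v C ≤ v13 := by
      have := val_le_of_subset hmono hCK {x, z}
        (fun _ => by simp) (fun h' => absurd h' hyC) (fun _ => by simp)
      rw [hv13]; exact this
    rw [hCval] at hCu
    simp only [hxC, hyC, hzC, if_true, if_false] at hCu
    linarith
  · -- only x ∈ C : C = (C \ {x}) ∪ {x}
    left
    refine ⟨C \ {x}, ?_, ?_⟩
    · intro a ha
      simp only [Finset.mem_sdiff, Finset.mem_singleton] at ha
      obtain ⟨ha, hax⟩ := ha
      have := hCK ha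
      simp only [Finset.mem_union, Finset.mem_insert, Finset.mem_singleton] at this
      rcases this with h' | h' | h' | h'
      · exact h'
      · exact absurd h' hax
      · exact absurd (h' ▸ ha) hyC
      · exact absurd (h' ▸ ha) hzC
    · ext a
      simp only [Finset.mem_union, Finset.mem_sdiff, Finset.mem_singleton]
      constructor
      · intro ha
        by_cases hax : a = x
        · tauto
        · tauto
      · rintro (⟨ha, _⟩ | ha)
        · exact ha
        · exact ha ▸ hxC
  · -- y, z ∈ C, x ∉ C : C = (C \ {y, z}) ∪ {y, z}
    right
    refine ⟨C \ {y, z}, ?_, ?_⟩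
    · intro a ha
      simp only [Finset.mem_sdiff, Finset.mem_insert, Finset.mem_singleton] at ha
      obtain ⟨ha, hayz⟩ := ha
      push_neg at hayz
      have := hCK ha
      simp only [Finset.mem_union, Finset.mem_insert, Finset.mem_singleton] at this
      rcases this with h' | h' | h' | h'
      · exact h'
      · exact absurd (h' ▸ ha) hxC
      · exact absurd h' hayz.1
      · exact absurd h' hayz.2
    · ext a
      simp only [Finset.mem_union, Finset.mem_sdiff, Finset.mem_insert,
        Finset.mem_singleton]
      constructor
      · intro ha
        by_cases hay : a = y
        · tauto
        by_cases haz : a = z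
        · tauto
        · tauto
      · rintro (⟨ha, _⟩ | ha | ha)
        · exact ha
        · exact ha ▸ hyC
        · exact ha ▸ hzC
  · -- only y ∈ C : impossible
    exfalso
    have hvC : v C ≤ v2 := by
      have := val_le_of_subset hmono hCK {y}
        (fun h' => absurd h' hxC) (fun _ => by simp) (fun h' => absurd h' hzC)
      rw [hv2]; exact this
    rw [hCval] at hCu
    simp only [hxC, hyC, hzC, if_true, if_false] at hCu
    linarith
  · -- only z ∈ C : impossible
    exfalso
    have hvC : v C ≤ v3 := by
      have := val_le_of_subset hmono hCK {z}
        (fun h' => absurd h' hxC) (fun h' => absurd h' hyC) (fun _ => by simp)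
      rw [hv3]; exact this
    rw [hCval] at hCu
    simp only [hxC, hyC, hzC, if_true, if_false] at hCu
    linarith
  · -- none of x, y, z ∈ C : impossible
    exfalso
    have hvC : v C ≤ v0 := by
      have := val_le_of_subset hmono hCK ∅
        (fun h' => absurd h' hxC) (fun h' => absurd h' hyC) (fun h' => absurd h' hzC)
      rw [hv0]; simpa using this
    rw [hCval] at hCu
    simp only [hxC, hyC, hzC, if_false] at hCu
    linarith

lemma sm_to_npsm {M : Type*} [Fintype M] [DecidableEq M]
    (v : Finset M → ℝ) (hsm : SMcond v) : NPSM v := by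
  rintro ⟨p, x, y, S, hpnn, hxy, hxS, hyS, hpx, hpy, hdS, hdSxy, hclass⟩
  have hsS := sum_union_singleton p hxS
  have hsSy := sum_union_singleton p hyS
  have hsSxy := sum_union_pair p hxy hxS hyS
  have hsmv := hsm x y S hxy hxS hyS
  have hux : util v p (S ∪ {x}) = v (S ∪ {x}) - (∑ a ∈ S, p a) - p x := by
    rw [util, hsS]; ring
  have huy : util v p (S ∪ {y}) = v (S ∪ {y}) - (∑ a ∈ S, p a) - p y := by
    rw [util, hsSy]; ring
  have huxy : util v p (S ∪ {x, y}) =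
      v (S ∪ {x, y}) - (∑ a ∈ S, p a) - p x - p y := by
    rw [util, hsSxy]; ring
  have huS : util v p S = v S - (∑ a ∈ S, p a) := by rw [util]
  have hSeq : util v p (S ∪ {x, y}) = util v p S :=
    le_antisymm (hdS _) (hdSxy _)
  have h1 : util v p (S ∪ {x}) ≤ util v p S := hdS _
  have h2 : util v p (S ∪ {y}) ≤ util v p S := hdS _
  have hxeq : util v p (S ∪ {x}) = util v p S := by
    rw [hux, huS]
    rw [hux, huS] at h1
    rw [huy, huS] at h2
    rw [huxy, huS] at hSeq
    linarith
  have hdx : InDemand v p (S ∪ {x}) := by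
    intro T; rw [hxeq]; exact hdS T
  rcases hclass _ hdx with hc | ⟨T, hTS, hTeq⟩
  · exact hxS (hc (by simp))
  · have : y ∈ S ∪ {x} := by rw [hTeq]; simp
    simp only [Finset.mem_union, Finset.mem_singleton] at this
    rcases this with h' | h'
    · exact hyS h'
    · exact hxy h'.symm

lemma rgp_to_nprgp {M : Type*} [Fintype M] [DecidableEq M]
    (v : Finset M → ℝ) (hrgp : RGPcond v) : NPRGP v := by
  rintro ⟨p, x, y, z, S, hpnn, hxy, hxz, hyz, hxS, hyS, hzS, hpx, hpy, hpz,
    hdx, hdyz, hclass⟩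
  have hsx := sum_union_singleton p hxS
  have hsy := sum_union_singleton p hyS
  have hsz := sum_union_singleton p hzS
  have hsyz := sum_union_pair p hyz hyS hzS
  have hsxz := sum_union_pair p hxz hxS hzS
  have hsxy := sum_union_pair p hxy hxS hyS
  have hux : util v p (S ∪ {x}) = v (S ∪ {x}) - (∑ a ∈ S, p a) - p x := by
    rw [util, hsx]; ring
  have huy : util v p (S ∪ {y}) = v (S ∪ {y}) - (∑ a ∈ S, p a) - p y := by
    rw [util, hsy]; ring
  have huz : util v p (S ∪ {z}) = v (S ∪ {z}) - (∑ a ∈ S, p a) - p z := by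
    rw [util, hsz]; ring
  have huyz : util v p (S ∪ {y, z}) =
      v (S ∪ {y, z}) - (∑ a ∈ S, p a) - p y - p z := by
    rw [util, hsyz]; ring
  have huxz : util v p (S ∪ {x, z}) =
      v (S ∪ {x, z}) - (∑ a ∈ S, p a) - p x - p z := by
    rw [util, hsxz]; ring
  have huxy : util v p (S ∪ {x, y}) =
      v (S ∪ {x, y}) - (∑ a ∈ S, p a) - p x - p y := by
    rw [util, hsxy]; ring
  have heq : util v p (S ∪ {y, z}) = util v p (S ∪ {x}) :=
    le_antisymm (hdx _) (hdyz _)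
  have hrv := hrgp x y z S hxy hxz hyz hxS hyS hzS
  rcases le_max_iff.mp hrv with hr | hr
  · -- v(S∪{x}) + v(S∪{y,z}) ≤ v(S∪{y}) + v(S∪{x,z})
    have h1 : util v p (S ∪ {y}) ≤ util v p (S ∪ {x}) := hdx _
    have h2 : util v p (S ∪ {x, z}) ≤ util v p (S ∪ {x}) := hdx _
    have hyeq : util v p (S ∪ {y}) = util v p (S ∪ {x}) := by
      rw [huy, hux]
      rw [huy, hux] at h1
      rw [huxz, hux] at h2
      rw [huyz, hux] at heq
      linarith
    have hdy : InDemand v p (S ∪ {y}) := by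
      intro T; rw [hyeq]; exact hdx T
    rcases hclass _ hdy with ⟨T, hTS, hTeq⟩ | ⟨T, hTS, hTeq⟩
    · have : x ∈ S ∪ {y} := by rw [hTeq]; simp
      simp only [Finset.mem_union, Finset.mem_singleton] at this
      rcases this with h' | h'
      · exact hxS h'
      · exact hxy h'
    · have : z ∈ S ∪ {y} := by rw [hTeq]; simp
      simp only [Finset.mem_union, Finset.mem_singleton] at this
      rcases this with h' | h'
      · exact hzS h'
      · exact hyz h'.symm
  · -- v(S∪{x}) + v(S∪{y,z}) ≤ v(S∪{z}) + v(S∪{x,y})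
    have h1 : util v p (S ∪ {z}) ≤ util v p (S ∪ {x}) := hdx _
    have h2 : util v p (S ∪ {x, y}) ≤ util v p (S ∪ {x}) := hdx _
    have hzeq : util v p (S ∪ {z}) = util v p (S ∪ {x}) := by
      rw [huz, hux]
      rw [huz, hux] at h1
      rw [huxy, hux] at h2
      rw [huyz, hux] at heq
      linarith
    have hdz : InDemand v p (S ∪ {z}) := by
      intro T; rw [hzeq]; exact hdx T
    rcases hclass _ hdz with ⟨T, hTS, hTeq⟩ | ⟨T, hTS, hTeq⟩
    · have : x ∈ S ∪ {z} := by rw [hTeq]; simp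
      simp only [Finset.mem_union, Finset.mem_singleton] at this
      rcases this with h' | h'
      · exact hxS h'
      · exact hxz h'
    · have : y ∈ S ∪ {z} := by rw [hTeq]; simp
      simp only [Finset.mem_union, Finset.mem_singleton] at this
      rcases this with h' | h'
      · exact hyS h'
      · exact hyz h'

/-- `v` satisfies (SM) and (RGP) iff it satisfies (NP-SM) and
(NP-RGP). -/
theorem sm_rgp_iff_npsm_nprgp
    {M : Type*} [Fintype M] [DecidableEq M]
    (v : Finset M → ℝ) (hmono : MonotoneVal v) (hnorm : v ∅ = 0) :
    (SMcond v ∧ RGPcond v) ↔ (NPSM v ∧ NPRGP v) := by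
  constructor
  · rintro ⟨hsm, hrgp⟩
    exact ⟨sm_to_npsm v hsm, rgp_to_nprgp v hrgp⟩
  · rintro ⟨hnpsm, hnprgp⟩
    have hsm := npsm_to_sm v hmono hnorm hnpsm
    exact ⟨hsm, sm_nprgp_to_rgp v hmono hnorm hsm hnprgp⟩
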